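/- For 1 ≤ k ≤ n, the dual of the k-th branch Λ_k = {A ∈ Sym²(ℝⁿ) : λ_k(A) ≥ 0} of the homogeneous Monge–Ampère equation is Λ_{n−k+1}; that is, Λ̃_k = Λ_{n−k+1}. -/

import Mathlib

open Pointwise

/-- The Dirichlet dual of a set of symmetric matrices, inside `Sym²(ℝⁿ)`. -/
def dirichletDual {n : ℕ} (F : Set (selfAdjoint (Matrix (Fin n) (Fin n) ℝ))) :
    Set (selfAdjoint (Matrix (Fin n) (Fin n) ℝ)) :=
  -((interior F)ᶜ)

/-- An element of `Sym²(ℝⁿ)` is a Hermitian (= real symmetric) matrix. -/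
theorem hermOf {n : ℕ} (A : selfAdjoint (Matrix (Fin n) (Fin n) ℝ)) :
    (A : Matrix (Fin n) (Fin n) ℝ).IsHermitian := A.prop

/-- The increasingly ordered eigenvalues `λ_1(A) ≤ … ≤ λ_n(A)` of a symmetric matrix. -/
noncomputable def sortedEig {n : ℕ} (A : Matrix (Fin n) (Fin n) ℝ) (hA : A.IsHermitian) :
    Fin n → ℝ :=
  hA.eigenvalues ∘ Tuple.sort hA.eigenvalues

/-- The `k`-th branch `Λ_k = {A : λ_k(A) ≥ 0}` of the homogeneous Monge–Ampère equation
(indices `0, …, n−1` correspond to `1, …, n`). -/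
noncomputable def branch (n : ℕ) (k : Fin n) : Set (selfAdjoint (Matrix (Fin n) (Fin n) ℝ)) :=
  {A | 0 ≤ sortedEig (A : Matrix (Fin n) (Fin n) ℝ) (hermOf A) k}

section Aux
open Matrix

variable {n : ℕ}

noncomputable def qf (A : Matrix (Fin n) (Fin n) ℝ) (x : EuclideanSpace ℝ (Fin n)) : ℝ :=
  inner (𝕜 := ℝ) x ((WithLp.equiv 2 (Fin n → ℝ)).symm (A *ᵥ x))

theorem inner_mulVec_symm (A : Matrix (Fin n) (Fin n) ℝ) (hA : A.IsHermitian)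
    (v w : EuclideanSpace ℝ (Fin n)) :
    inner (𝕜 := ℝ) v ((WithLp.equiv 2 (Fin n → ℝ)).symm (A *ᵥ w)) =
    inner (𝕜 := ℝ) ((WithLp.equiv 2 (Fin n → ℝ)).symm (A *ᵥ v)) w := by
  simp only [PiLp.inner_apply, RCLike.inner_apply, conj_trivial, WithLp.equiv_symm_apply, PiLp.toLp_apply]
  rw [Finset.sum_congr rfl fun i _ => mul_comm ((A *ᵥ w.ofLp) i) (v.ofLp i),
    Finset.sum_congr rfl fun i _ => mul_comm (w.ofLp i) ((A *ᵥ v.ofLp) i)]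
  have h1 : ∑ i, (v i) * (A *ᵥ (w : Fin n → ℝ)) i = (v : Fin n → ℝ) ⬝ᵥ (A *ᵥ w) := rfl
  have h2 : ∑ i, (A *ᵥ (v : Fin n → ℝ)) i * w i = (A *ᵥ (v : Fin n → ℝ)) ⬝ᵥ w := rfl
  rw [h1, h2, Matrix.dotProduct_mulVec, ← Matrix.mulVec_transpose,
    show Aᵀ = A from (Matrix.conjTranspose_eq_transpose_of_trivial A) ▸ hA]

/-- sorted eigenbasis -/
noncomputable def sb (A : Matrix (Fin n) (Fin n) ℝ) (hA : A.IsHermitian) :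
    OrthonormalBasis (Fin n) ℝ (EuclideanSpace ℝ (Fin n)) :=
  hA.eigenvectorBasis.reindex (Tuple.sort hA.eigenvalues).symm

noncomputable def sE (A : Matrix (Fin n) (Fin n) ℝ) (hA : A.IsHermitian) : Fin n → ℝ :=
  hA.eigenvalues ∘ Tuple.sort hA.eigenvalues

theorem sE_mono (A : Matrix (Fin n) (Fin n) ℝ) (hA : A.IsHermitian) : Monotone (sE A hA) :=
  Tuple.monotone_sort _

theorem sb_eig (A : Matrix (Fin n) (Fin n) ℝ) (hA : A.IsHermitian) (i : Fin n) :
    (WithLp.equiv 2 (Fin n → ℝ)).symm (A *ᵥ (sb A hA i)) = sE A hA i • (sb A hA i) := by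
  have := hA.mulVec_eigenvectorBasis (Tuple.sort hA.eigenvalues i)
  simp only [sb, sE, OrthonormalBasis.reindex_apply, Equiv.symm_symm,
    Function.comp_apply]
  ext j
  simpa using congrFun this j

theorem qf_eq (A : Matrix (Fin n) (Fin n) ℝ) (hA : A.IsHermitian) (x : EuclideanSpace ℝ (Fin n)) :
    qf A x = ∑ i, sE A hA i * (inner (𝕜 := ℝ) (sb A hA i) x)^2 := by
  have h := (sb A hA).sum_inner_mul_inner x ((WithLp.equiv 2 (Fin n → ℝ)).symm (A *ᵥ x))
  rw [qf, ← h]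
  congr 1; ext i
  have : inner (𝕜 := ℝ) (sb A hA i) ((WithLp.equiv 2 (Fin n → ℝ)).symm (A *ᵥ x))
      = sE A hA i * inner (𝕜 := ℝ) (sb A hA i) x := by
    rw [inner_mulVec_symm A hA, sb_eig A hA i, inner_smul_left]
    simp
  rw [this, real_inner_comm x]; ring

theorem norm_sq_eq (A : Matrix (Fin n) (Fin n) ℝ) (hA : A.IsHermitian)
    (x : EuclideanSpace ℝ (Fin n)) :
    ‖x‖^2 = ∑ i, (inner (𝕜 := ℝ) (sb A hA i) x)^2 := by
  have h := (sb A hA).sum_inner_mul_inner x x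
  rw [← real_inner_self_eq_norm_sq, ← h]
  congr 1; ext i; rw [real_inner_comm x]; ring

noncomputable def Wspan (A : Matrix (Fin n) (Fin n) ℝ) (hA : A.IsHermitian) (s : Finset (Fin n)) :
    Submodule ℝ (EuclideanSpace ℝ (Fin n)) :=
  Submodule.span ℝ (sb A hA '' s)

theorem Wspan_finrank (A : Matrix (Fin n) (Fin n) ℝ) (hA : A.IsHermitian) (s : Finset (Fin n)) :
    Module.finrank ℝ (Wspan A hA s) = s.card := by
  have li : LinearIndependent ℝ (fun i : Fin n => sb A hA i) :=
    (sb A hA).orthonormal.linearIndependent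
  have li2 : LinearIndependent ℝ (fun i : s => sb A hA i) :=
    li.comp (Subtype.val : s → Fin n) Subtype.val_injective
  have := finrank_span_eq_card li2
  rw [Wspan]
  have hr : Set.range (fun i : s => sb A hA i) = sb A hA '' s := by
    ext y; simp [Set.mem_image]
  rw [← hr, this]
  simp

theorem Wspan_inner_eq_zero (A : Matrix (Fin n) (Fin n) ℝ) (hA : A.IsHermitian)
    (s : Finset (Fin n)) {x : EuclideanSpace ℝ (Fin n)} (hx : x ∈ Wspan A hA s)
    {j : Fin n} (hj : j ∉ s) : inner (𝕜 := ℝ) (sb A hA j) x = 0 := by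
  have hle : Wspan A hA s ≤ LinearMap.ker (innerSL ℝ (sb A hA j) : _ →ₗ[ℝ] ℝ) := by
    rw [Wspan, Submodule.span_le]
    rintro y ⟨i, hi, rfl⟩
    simp only [SetLike.mem_coe, LinearMap.mem_ker, ContinuousLinearMap.coe_coe, innerSL_apply_apply]
    exact (sb A hA).orthonormal.2 (fun h => hj (h ▸ hi))
  simpa using hle hx

theorem qf_ge_of_mem_Ici (A : Matrix (Fin n) (Fin n) ℝ) (hA : A.IsHermitian) (k : Fin n)
    {x : EuclideanSpace ℝ (Fin n)} (hx : x ∈ Wspan A hA (Finset.Ici k)) :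
    sE A hA k * ‖x‖^2 ≤ qf A x := by
  rw [qf_eq A hA, norm_sq_eq A hA, Finset.mul_sum]
  refine Finset.sum_le_sum fun i _ => ?_
  by_cases hi : i ∈ Finset.Ici k
  · exact mul_le_mul_of_nonneg_right (sE_mono A hA (Finset.mem_Ici.mp hi)) (sq_nonneg _)
  · rw [Wspan_inner_eq_zero A hA _ hx hi]; simp

theorem qf_le_of_mem_Iic (A : Matrix (Fin n) (Fin n) ℝ) (hA : A.IsHermitian) (k : Fin n)
    {x : EuclideanSpace ℝ (Fin n)} (hx : x ∈ Wspan A hA (Finset.Iic k)) :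
    qf A x ≤ sE A hA k * ‖x‖^2 := by
  rw [qf_eq A hA, norm_sq_eq A hA, Finset.mul_sum]
  refine Finset.sum_le_sum fun i _ => ?_
  by_cases hi : i ∈ Finset.Iic k
  · exact mul_le_mul_of_nonneg_right (sE_mono A hA (Finset.mem_Iic.mp hi)) (sq_nonneg _)
  · rw [Wspan_inner_eq_zero A hA _ hx hi]; simp

theorem exists_ne_zero_mem_inf (W V : Submodule ℝ (EuclideanSpace ℝ (Fin n)))
    (h : n < Module.finrank ℝ W + Module.finrank ℝ V) :
    ∃ x : EuclideanSpace ℝ (Fin n), x ≠ 0 ∧ x ∈ W ∧ x ∈ V := by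
  have hsum := Submodule.finrank_sup_add_finrank_inf_eq W V
  have hle : Module.finrank ℝ ↥(W ⊔ V) ≤ n := by
    simpa using Submodule.finrank_le (W ⊔ V)
  have hpos : 0 < Module.finrank ℝ ↥(W ⊓ V) := by omega
  obtain ⟨⟨x, hxmem⟩, hx0⟩ := Module.finrank_pos_iff_exists_ne_zero.mp hpos
  exact ⟨x, fun h => hx0 (Subtype.ext h), hxmem.1, hxmem.2⟩

theorem card_Ici (k : Fin n) : (Finset.Ici k).card = n - k := by
  simpa using Fin.card_Ici k

theorem card_Iic (k : Fin n) : (Finset.Iic k).card = k + 1 := by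
  simpa using Fin.card_Iic k

theorem sE_ge_iff (A : Matrix (Fin n) (Fin n) ℝ) (hA : A.IsHermitian) (k : Fin n) (c : ℝ) :
    c ≤ sE A hA k ↔ ∃ W : Submodule ℝ (EuclideanSpace ℝ (Fin n)),
      Module.finrank ℝ W = n - k ∧ ∀ x ∈ W, c * ‖x‖^2 ≤ qf A x := by
  constructor
  · intro h
    refine ⟨Wspan A hA (Finset.Ici k), by rw [Wspan_finrank, card_Ici], fun x hx => ?_⟩
    calc c * ‖x‖^2 ≤ sE A hA k * ‖x‖^2 := by nlinarith [sq_nonneg ‖x‖]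
    _ ≤ qf A x := qf_ge_of_mem_Ici A hA k hx
  · rintro ⟨W, hW, hq⟩
    have hdim : n < Module.finrank ℝ W + Module.finrank ℝ (Wspan A hA (Finset.Iic k)) := by
      rw [hW, Wspan_finrank, card_Iic]; omega
    obtain ⟨x, hx0, hxW, hxV⟩ := exists_ne_zero_mem_inf W (Wspan A hA (Finset.Iic k)) hdim
    have h1 := hq x hxW
    have h2 := qf_le_of_mem_Iic A hA k hxV
    have h3 : (0:ℝ) < ‖x‖^2 := by have := norm_pos_iff.mpr hx0; positivity
    nlinarith

theorem sE_le_iff (A : Matrix (Fin n) (Fin n) ℝ) (hA : A.IsHermitian) (k : Fin n) (c : ℝ) :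
    sE A hA k ≤ c ↔ ∃ W : Submodule ℝ (EuclideanSpace ℝ (Fin n)),
      Module.finrank ℝ W = k + 1 ∧ ∀ x ∈ W, qf A x ≤ c * ‖x‖^2 := by
  constructor
  · intro h
    refine ⟨Wspan A hA (Finset.Iic k), by rw [Wspan_finrank, card_Iic], fun x hx => ?_⟩
    calc qf A x ≤ sE A hA k * ‖x‖^2 := qf_le_of_mem_Iic A hA k hx
    _ ≤ c * ‖x‖^2 := by nlinarith [sq_nonneg ‖x‖]
  · rintro ⟨W, hW, hq⟩
    have hdim : n < Module.finrank ℝ W + Module.finrank ℝ (Wspan A hA (Finset.Ici k)) := by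
      rw [hW, Wspan_finrank, card_Ici]; have := k.isLt; omega
    obtain ⟨x, hx0, hxW, hxV⟩ := exists_ne_zero_mem_inf W (Wspan A hA (Finset.Ici k)) hdim
    have h1 := hq x hxW
    have h2 := qf_ge_of_mem_Ici A hA k hxV
    have h3 : (0:ℝ) < ‖x‖^2 := by have := norm_pos_iff.mpr hx0; positivity
    nlinarith

theorem qf_apply (A : Matrix (Fin n) (Fin n) ℝ) (x : EuclideanSpace ℝ (Fin n)) :
    qf A x = ∑ i, x i * (A *ᵥ (x : Fin n → ℝ)) i := by
  simp [qf, PiLp.inner_apply, mul_comm]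

theorem norm_sq_eq_sum (x : EuclideanSpace ℝ (Fin n)) : ‖x‖^2 = ∑ i, x i * x i := by
  rw [← real_inner_self_eq_norm_sq]; simp only [PiLp.inner_apply, RCLike.inner_apply, conj_trivial]

theorem qf_sub (M N : Matrix (Fin n) (Fin n) ℝ) (x : EuclideanSpace ℝ (Fin n)) :
    qf (M - N) x = qf M x - qf N x := by
  simp [qf_apply, Matrix.sub_mulVec, Matrix.sub_apply, mul_sub, Finset.sum_sub_distrib]

theorem qf_neg (M : Matrix (Fin n) (Fin n) ℝ) (x : EuclideanSpace ℝ (Fin n)) :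
    qf (-M) x = - qf M x := by
  simp [qf_apply, Matrix.neg_mulVec, ← Finset.sum_neg_distrib]

theorem qf_smul_one (ε : ℝ) (x : EuclideanSpace ℝ (Fin n)) :
    qf (ε • (1 : Matrix (Fin n) (Fin n) ℝ)) x = ε * ‖x‖^2 := by
  rw [qf_apply, norm_sq_eq_sum, Finset.mul_sum]
  congr 1; ext i
  rw [Matrix.smul_mulVec, Matrix.one_mulVec]
  simp; ring

theorem qf_zero (A : Matrix (Fin n) (Fin n) ℝ) : qf A (0 : EuclideanSpace ℝ (Fin n)) = 0 := by
  simp [qf_apply]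

theorem qf_smul (A : Matrix (Fin n) (Fin n) ℝ) (c : ℝ) (x : EuclideanSpace ℝ (Fin n)) :
    qf A (c • x) = c^2 * qf A x := by
  have h : ((c • x : EuclideanSpace ℝ (Fin n)) : Fin n → ℝ) = c • (x : Fin n → ℝ) := rfl
  simp only [qf_apply, h, Matrix.mulVec_smul, Finset.mul_sum]
  congr 1; ext i
  simp [Pi.smul_apply, smul_eq_mul]; ring

theorem continuous_qf : Continuous (fun p : selfAdjoint (Matrix (Fin n) (Fin n) ℝ) ×
    EuclideanSpace ℝ (Fin n) => qf (p.1 : Matrix (Fin n) (Fin n) ℝ) p.2) := by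
  have h1 : Continuous fun p : selfAdjoint (Matrix (Fin n) (Fin n) ℝ) ×
      EuclideanSpace ℝ (Fin n) => (p.1 : Matrix (Fin n) (Fin n) ℝ) :=
    continuous_subtype_val.comp continuous_fst
  have h2 : Continuous fun p : selfAdjoint (Matrix (Fin n) (Fin n) ℝ) ×
      EuclideanSpace ℝ (Fin n) => (p.2 : Fin n → ℝ) :=
    (PiLp.continuous_ofLp 2 (fun _ : Fin n => ℝ)).comp continuous_snd
  have h3 := h1.matrix_mulVec h2
  have h4 := (PiLp.continuous_toLp 2 (fun _ : Fin n => ℝ)).comp h3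
  exact continuous_snd.inner h4

theorem sortedEig_eq_sE {n : ℕ} (A : Matrix (Fin n) (Fin n) ℝ) (hA : A.IsHermitian) :
    sortedEig A hA = sE A hA := rfl

theorem interior_branch (n : ℕ) (k : Fin n) :
    interior (branch n k) = {A : selfAdjoint (Matrix (Fin n) (Fin n) ℝ) |
      0 < sE (A : Matrix (Fin n) (Fin n) ℝ) (hermOf A) k} := by
  apply Set.Subset.antisymm
  · -- interior ⊆ {0 < λ_k}
    intro A hA
    -- the path ε ↦ A - ε • 1
    set g : ℝ → selfAdjoint (Matrix (Fin n) (Fin n) ℝ) := fun ε =>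
      ⟨(A : Matrix (Fin n) (Fin n) ℝ) - ε • 1, by
        rw [selfAdjoint.mem_iff, star_sub, star_smul]
        simp [A.2.star_eq]⟩ with hg
    have hgc : Continuous g := by
      apply Continuous.subtype_mk
      exact continuous_const.sub (continuous_id.smul continuous_const)
    have hg0 : g 0 = A := by
      apply Subtype.ext; simp [hg]
    have hev : ∀ᶠ ε in nhds (0 : ℝ), g ε ∈ branch n k := by
      have hc := hgc.continuousAt (x := (0:ℝ))
      have hmem : interior (branch n k) ∈ nhds (g 0) := by
        rw [hg0]; exact isOpen_interior.mem_nhds hA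
      exact (hc.eventually_mem hmem).mono fun ε h => interior_subset h
    obtain ⟨δ, hδ, hball⟩ := Metric.eventually_nhds_iff.mp hev
    set ε := δ / 2 with hε
    have hεpos : 0 < ε := by positivity
    have hmem : g ε ∈ branch n k := hball (by
      rw [Real.dist_eq, sub_zero, abs_of_pos hεpos]; rw [hε]; linarith)
    have h0 : (0:ℝ) ≤ sE ((A : Matrix (Fin n) (Fin n) ℝ) - ε • 1) (hermOf (g ε)) k := hmem
    rw [show (0:ℝ) = 0 from rfl] at h0
    obtain ⟨W, hWdim, hWq⟩ := (sE_ge_iff _ (hermOf (g ε)) k 0).mp h0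
    have : ε ≤ sE (A : Matrix (Fin n) (Fin n) ℝ) (hermOf A) k := by
      refine (sE_ge_iff _ (hermOf A) k ε).mpr ⟨W, hWdim, fun x hx => ?_⟩
      have := hWq x hx
      rw [qf_sub, qf_smul_one] at this
      linarith
    exact lt_of_lt_of_le hεpos this
  · -- {0 < λ_k} ⊆ interior
    intro A hA
    obtain ⟨W, hWdim, hWq⟩ :=
      (sE_ge_iff _ (hermOf A) k (sE (A : Matrix (Fin n) (Fin n) ℝ) (hermOf A) k)).mp le_rfl
    set S : Set (EuclideanSpace ℝ (Fin n)) := Metric.sphere 0 1 ∩ (W : Set _) with hS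
    have hScomp : IsCompact S := (isCompact_sphere 0 1).inter_right W.closed_of_finiteDimensional
    have hev : ∀ᶠ B : selfAdjoint (Matrix (Fin n) (Fin n) ℝ) in nhds A,
        ∀ x ∈ S, 0 < qf (B : Matrix (Fin n) (Fin n) ℝ) x := by
      apply hScomp.eventually_forall_of_forall_eventually
      intro x hx
      have hopen : IsOpen {z : selfAdjoint (Matrix (Fin n) (Fin n) ℝ) ×
          EuclideanSpace ℝ (Fin n) | 0 < qf (z.1 : Matrix (Fin n) (Fin n) ℝ) z.2} :=
        isOpen_lt continuous_const continuous_qf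
      have hxpos : 0 < qf (A : Matrix (Fin n) (Fin n) ℝ) x := by
        have h1 := hWq x hx.2
        have h2 : ‖x‖ = 1 := by simpa using hx.1
        rw [h2] at h1; simp at h1
        exact lt_of_lt_of_le hA h1
      exact (hopen.eventually_mem (x := (A, x)) (show (A, x) ∈ _ from hxpos)).mono fun z h => h
    rw [mem_interior_iff_mem_nhds]
    refine Filter.mem_of_superset hev ?_
    intro B hB
    show B ∈ branch n k
    have hres : (0:ℝ) ≤ sE (B : Matrix (Fin n) (Fin n) ℝ) (hermOf B) k := by
      refine (sE_ge_iff _ (hermOf B) k 0).mpr ⟨W, hWdim, fun x hx => ?_⟩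
      by_cases hx0 : x = 0
      · subst hx0; simp [qf_zero]
      · have hn : (0:ℝ) < ‖x‖ := norm_pos_iff.mpr hx0
        set u : EuclideanSpace ℝ (Fin n) := ‖x‖⁻¹ • x with hu
        have hu1 : ‖u‖ = 1 := by
          rw [hu, norm_smul]; simp [abs_of_pos hn, inv_mul_cancel₀ hn.ne']
        have huW : u ∈ W := W.smul_mem _ hx
        have hupos : 0 < qf (B : Matrix (Fin n) (Fin n) ℝ) u := hB u ⟨by simp [hu1], huW⟩
        have hxu : x = ‖x‖ • u := by rw [hu, smul_smul, mul_inv_cancel₀ hn.ne', one_smul]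
        rw [hxu, qf_smul]
        nlinarith [hupos, pow_pos hn 2]
    exact hres

theorem sE_neg_le_iff (A : Matrix (Fin n) (Fin n) ℝ) (hA : A.IsHermitian)
    (hA' : (-A).IsHermitian) (k : Fin n) :
    sE (-A) hA' k ≤ 0 ↔ 0 ≤ sE A hA k.rev := by
  rw [sE_le_iff _ hA' k 0, sE_ge_iff _ hA k.rev 0]
  have hrev : n - (k.rev : ℕ) = (k : ℕ) + 1 := by
    have h1 : (k.rev : ℕ) = n - ((k : ℕ) + 1) := Fin.val_rev k
    have := k.isLt; omega
  rw [hrev]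
  constructor
  · rintro ⟨W, hWdim, hWq⟩
    refine ⟨W, hWdim, fun x hx => ?_⟩
    have := hWq x hx
    rw [qf_neg] at this
    linarith
  · rintro ⟨W, hWdim, hWq⟩
    refine ⟨W, hWdim, fun x hx => ?_⟩
    rw [qf_neg]
    have := hWq x hx
    linarith

end Aux

/-- The dual of the branch `Λ_k` is `Λ_{n−k+1}` (in 1-based indexing);
with 0-based indices, `Λ̃_k = Λ_{k.rev}` where `k.rev = n − 1 − k`. -/
theorem dual_branch (n : ℕ) (k : Fin n) :
    dirichletDual (branch n k) = branch n k.rev := by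
  ext A
  have hcoe : ((-A : selfAdjoint (Matrix (Fin n) (Fin n) ℝ)) : Matrix (Fin n) (Fin n) ℝ)
      = -(A : Matrix (Fin n) (Fin n) ℝ) := rfl
  constructor
  · intro h
    have h1 : -A ∉ interior (branch n k) := Set.mem_neg.mp h
    rw [interior_branch] at h1
    have h2 : sE ((-A : selfAdjoint (Matrix (Fin n) (Fin n) ℝ)) : Matrix (Fin n) (Fin n) ℝ)
        (hermOf (-A)) k ≤ 0 := not_lt.mp h1
    have h3 : sE (-(A : Matrix (Fin n) (Fin n) ℝ)) ((hermOf A).neg) k ≤ 0 := h2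
    exact (sE_neg_le_iff _ (hermOf A) _ k).mp h3
  · intro h
    apply Set.mem_neg.mpr
    rw [interior_branch]
    intro h1
    have h2 : sE (-(A : Matrix (Fin n) (Fin n) ℝ)) ((hermOf A).neg) k ≤ 0 :=
      (sE_neg_le_iff _ (hermOf A) _ k).mpr h
    simp only [Set.mem_setOf_eq] at h1
    have h3 : (0:ℝ) < sE (-(A : Matrix (Fin n) (Fin n) ℝ)) ((hermOf A).neg) k := h1
    linarith
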